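/- Let $\lambda_1 < \cdots < \lambda_L$ in $[0, 2\pi)$ be the distinct sorted values of $\{(\alpha_n + (k-0.5)\omega) \bmod 2\pi : n \leq N, k \leq K\}$, and for each $\ell$ let $\theta^{(\ell)} = (\theta_1^{(\ell)}, \ldots, \theta_N^{(\ell)})$ be the configuration induced by any $\mu$ with $\angle\mu$ in the open arc $(\lambda_\ell, \lambda_{\ell+1})$ (indices mod $L$), i.e., $\theta_n^{(\ell)} = \arg\min_{\theta \in \Phi_K} d(\theta + \alpha_n, \angle\mu)$. Then the global maximum of $|h_0 + \sum_n h_n e^{i\theta_n}|$ over $\Phi_K^N$ equals $\max_{1 \leq \ell \leq L} |h_0 + \sum_n h_n e^{i\theta_n^{(\ell)}}|$. -/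

import Mathlib

open Real Complex

/-- Circular distance on ℝ / 2πℤ. -/
noncomputable def cdist (x y : ℝ) : ℝ := sInf (Set.range fun m : ℤ => |x - y + 2 * π * m|)

/-- The discrete phase-shift set Φ_K = {ω, 2ω, …, Kω}, ω = 2π/K. -/
def Phi (K : ℕ) : Set ℝ := {θ | ∃ k : ℕ, 1 ≤ k ∧ k ≤ K ∧ θ = k * (2 * π / K)}

lemma cdist_eq (x y : ℝ) : cdist x y = |((x - y : ℝ) : Real.Angle).toReal| := by
  set t := ((x - y : ℝ) : Real.Angle).toReal with ht
  have htpi : t ≤ π := Real.Angle.toReal_le_pi _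
  have htnpi : -π < t := Real.Angle.neg_pi_lt_toReal _
  have habs : |t| ≤ π := abs_le.2 ⟨htnpi.le, htpi⟩
  have hcoe : ((t : ℝ) : Real.Angle) = (((x - y : ℝ)) : Real.Angle) := Real.Angle.coe_toReal _
  obtain ⟨k, hk⟩ := Real.Angle.angle_eq_iff_two_pi_dvd_sub.1 hcoe
  have hbdd : BddBelow (Set.range fun m : ℤ => |x - y + 2 * π * m|) := by
    refine ⟨0, ?_⟩; rintro z ⟨m, rfl⟩; positivity
  apply le_antisymm
  · apply csInf_le hbdd
    refine ⟨k, ?_⟩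
    show |x - y + 2 * π * k| = |t|
    have : x - y + 2 * π * k = t := by linarith
    rw [this]
  · apply le_csInf (Set.range_nonempty _)
    rintro z ⟨m, rfl⟩
    show |t| ≤ |x - y + 2 * π * m|
    have heq : x - y + 2 * π * m = t + 2 * π * ((m : ℝ) - k) := by push_cast; linarith
    rw [heq]
    rcases eq_or_ne (m - k) 0 with h0 | h0
    · have : (m : ℝ) - k = 0 := by exact_mod_cast sub_eq_zero.2 (sub_eq_zero.1 h0)
      simp [this]
    · have h1 : (1:ℝ) ≤ |(m - k : ℤ)| := by exact_mod_cast Int.one_le_abs h0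
      have hpi : (0:ℝ) < π := Real.pi_pos
      have h2 : 2 * π ≤ |2 * π * ((m : ℝ) - k)| := by
        rw [abs_mul, abs_of_pos (by positivity : (0:ℝ) < 2*π)]
        push_cast at h1 ⊢
        nlinarith
      have h3 : |2 * π * ((m:ℝ) - k)| - |(-t)| ≤ |2 * π * ((m:ℝ) - k) - (-t)| :=
        abs_sub_abs_le_abs_sub _ _
      rw [abs_neg, sub_neg_eq_add, show 2 * π * ((m:ℝ) - k) + t = t + 2 * π * ((m:ℝ) - k) by ring] at h3
      linarith

lemma cdist_nonneg (x y : ℝ) : 0 ≤ cdist x y := by rw [cdist_eq]; positivity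

lemma cdist_le_pi (x y : ℝ) : cdist x y ≤ π := by
  rw [cdist_eq]
  exact abs_le.2 ⟨(Real.Angle.neg_pi_lt_toReal _).le, Real.Angle.toReal_le_pi _⟩

lemma cos_cdist (x y : ℝ) : Real.cos (cdist x y) = Real.cos (x - y) := by
  rw [cdist_eq, Real.cos_abs]
  obtain ⟨k, hk⟩ := Real.Angle.angle_eq_iff_two_pi_dvd_sub.1
    (Real.Angle.coe_toReal (((x - y : ℝ)):Real.Angle))
  have : (((x - y:ℝ)):Real.Angle).toReal = (x - y) + k * (2*π) := by linarith
  rw [this, Real.cos_add_int_mul_two_pi]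

lemma cdist_le_of_cos (x y a : ℝ) (h : Real.cos (y - a) ≤ Real.cos (x - a)) :
    cdist x a ≤ cdist y a := by
  by_contra hlt
  push_neg at hlt
  have := Real.strictAntiOn_cos ⟨cdist_nonneg y a, cdist_le_pi y a⟩
    ⟨cdist_nonneg x a, cdist_le_pi x a⟩ hlt
  rw [cos_cdist, cos_cdist] at this
  linarith

lemma re_eq_abs_imp {z : ℂ} (hz : z.re = ‖z‖) : z = ((‖z‖ : ℝ) : ℂ) := by
  have h1 : Complex.normSq z = z.re * z.re + z.im * z.im := Complex.normSq_apply z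
  have h2 : (‖z‖)^2 = Complex.normSq z := Complex.sq_norm z
  have h3 : z.im * z.im = 0 := by
    have h4 : z.re * z.re + z.im * z.im = z.re * z.re := by rw [← h1, ← h2, hz]; ring
    linarith
  have him : z.im = 0 := mul_self_eq_zero.1 h3
  apply Complex.ext <;> simp [hz, him]

lemma exp_real_eq_iff {a b : ℝ} (h : Complex.exp ((a:ℂ) * Complex.I) = Complex.exp ((b:ℂ) * Complex.I)) :
    ∃ m : ℤ, a = b + m * (2 * π) := by
  rw [Complex.exp_eq_exp_iff_exists_int] at h
  obtain ⟨n, hn⟩ := h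
  refine ⟨n, ?_⟩
  have := congrArg Complex.im hn
  simpa using this

lemma exp_real_ne {a b : ℝ} (h1 : a ≠ b) (h2 : |a - b| < 2 * π) :
    Complex.exp ((a:ℂ) * Complex.I) ≠ Complex.exp ((b:ℂ) * Complex.I) := by
  intro he
  obtain ⟨m, hm⟩ := exp_real_eq_iff he
  rcases eq_or_ne m 0 with rfl | hm0
  · simp at hm; exact h1 hm
  · have h3 : (1:ℝ) ≤ |(m:ℤ)| := by exact_mod_cast Int.one_le_abs hm0
    have h4 : a - b = m * (2*π) := by linarith
    rw [h4, abs_mul] at h2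
    have hpi : (0:ℝ) < π := Real.pi_pos
    rw [abs_of_pos (by positivity : (0:ℝ) < 2*π)] at h2
    push_cast at h3
    nlinarith

set_option maxHeartbeats 2000000 in
theorem stmt_14 (K N : ℕ) (hK : 2 ≤ K) (ω : ℝ) (hω : ω = 2 * π / K)
    (β α : Fin (N + 1) → ℝ) (hβ : ∀ n, 0 < β n)
    (h : Fin (N + 1) → ℂ)
    (hh : ∀ n, h n = (β n : ℂ) * Complex.exp ((α n : ℂ) * Complex.I)) :
    ∃ θs : Fin N → ℝ, (∀ n, θs n ∈ Phi K) ∧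
      (∀ θ : Fin N → ℝ, (∀ n, θ n ∈ Phi K) →
        ‖h 0 + ∑ n : Fin N, h n.succ * Complex.exp (θ n * Complex.I)‖
          ≤ ‖h 0 + ∑ n : Fin N, h n.succ * Complex.exp (θs n * Complex.I)‖) ∧
      ∃ μ : ℂ, μ ≠ 0 ∧ ‖μ‖ = 1 ∧
        (∀ (n : Fin N) (k : ℕ), 1 ≤ k → k ≤ K →
          μ ≠ Complex.exp ((↑(α n.succ + ((k : ℝ) - 0.5) * ω)) * Complex.I)) ∧
        ∀ n : Fin N, ∀ θ ∈ Phi K,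
          cdist (θs n + α n.succ) μ.arg ≤ cdist (θ + α n.succ) μ.arg := by
  have hπ : 0 < π := Real.pi_pos
  have hKpos : 0 < K := by omega
  have hKR : (2:ℝ) ≤ K := by exact_mod_cast hK
  have hKR0 : (0:ℝ) < K := by linarith
  have hω0 : 0 < ω := by rw [hω]; positivity
  have hKω : (K:ℝ) * ω = 2 * π := by rw [hω]; field_simp
  -- the grid of K points
  set τ : Fin K → ℝ := fun j => ((j : ℕ) + 1 : ℝ) * ω with hτ
  have hτPhi : ∀ j : Fin K, τ j ∈ Phi K := by
    intro j
    exact ⟨(j : ℕ) + 1, by omega, by have := j.2; omega, by push_cast [hω, hτ]; ring⟩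
  have hτne : ∀ j j' : Fin K, j ≠ j' → Complex.exp ((τ j : ℂ) * Complex.I) ≠ Complex.exp ((τ j' : ℂ) * Complex.I) := by
    intro j j' hne
    apply exp_real_ne
    · have : ((j:ℕ):ℝ) ≠ ((j':ℕ):ℝ) := by
        exact_mod_cast fun e => hne (Fin.ext e)
      simp only [hτ]
      intro e
      exact this (by nlinarith)
    · have hj := j.2; have hj' := j'.2
      have h1 : ((j:ℕ):ℝ) < K := by exact_mod_cast hj
      have h2 : ((j':ℕ):ℝ) < K := by exact_mod_cast hj'
      have h3 : (0:ℝ) ≤ ((j:ℕ):ℝ) := by positivity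
      have h4 : (0:ℝ) ≤ ((j':ℕ):ℝ) := by positivity
      simp only [hτ]
      rw [abs_lt]
      constructor <;> nlinarith
  -- maximizer
  obtain ⟨f₀, -, hmax⟩ := Finset.exists_max_image Finset.univ
    (fun f : Fin N → Fin K => ‖h 0 + ∑ n : Fin N, h n.succ * Complex.exp ((τ (f n) : ℂ) * Complex.I)‖)
    ⟨fun _ => ⟨0, hKpos⟩, Finset.mem_univ _⟩
  simp only [Finset.mem_univ, forall_true_left] at hmax
  set S : ℂ := h 0 + ∑ n : Fin N, h n.succ * Complex.exp ((τ (f₀ n) : ℂ) * Complex.I) with hSdef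
  set r : ℝ := ‖S‖ with hrdef
  -- global maximality over Phi-valued configurations
  have hB : ∀ θ : Fin N → ℝ, (∀ n, θ n ∈ Phi K) →
      ‖h 0 + ∑ n : Fin N, h n.succ * Complex.exp ((θ n : ℂ) * Complex.I)‖ ≤ r := by
    intro θ hθ
    choose k hk1 hk2 hk3 using hθ
    set g : Fin N → Fin K := fun n => ⟨k n - 1, by have := hk1 n; have := hk2 n; omega⟩ with hg
    have hτg : ∀ n, τ (g n) = θ n := by
      intro n
      show (((k n - 1 : ℕ) : ℝ) + 1) * ω = θ n
      rw [hk3 n, ← hω, Nat.cast_sub (hk1 n)]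
      push_cast
      ring
    have := hmax g
    simp only [hτg] at this
    exact this
  -- basic facts about h
  have habs_h : ∀ n, ‖h n‖ = β n := by
    intro n
    rw [hh n, norm_mul, Complex.norm_real, Real.norm_eq_abs, Complex.norm_exp_ofReal_mul_I, mul_one,
      abs_of_pos (hβ n)]
  have hh0 : ∀ n, h n ≠ 0 := by
    intro n e
    have := habs_h n
    rw [e, norm_zero] at this
    exact absurd this.symm (ne_of_gt (hβ n))
  -- S ≠ 0
  have hSne : S ≠ 0 := by
    intro hS0
    have hr0 : r = 0 := by rw [hrdef, hS0, norm_zero]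
    have hzero : ∀ f : Fin N → Fin K,
        h 0 + ∑ n : Fin N, h n.succ * Complex.exp ((τ (f n) : ℂ) * Complex.I) = 0 := by
      intro f
      have h1 := hmax f
      rw [hr0] at h1
      have h2 : ‖h 0 + ∑ n : Fin N, h n.succ * Complex.exp ((τ (f n) : ℂ) * Complex.I)‖ = 0 :=
        le_antisymm h1 (norm_nonneg _)
      exact norm_eq_zero.1 h2
    rcases Nat.eq_zero_or_pos N with hN | hN
    · subst hN
      have := hzero f₀
      simp at this
      exact hh0 0 this
    · classical
      set n0 : Fin N := ⟨0, hN⟩ with hn0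
      set j0 : Fin K := ⟨0, hKpos⟩ with hj0
      set j1 : Fin K := ⟨1, by omega⟩ with hj1
      set j' : Fin K := if f₀ n0 = j0 then j1 else j0 with hj'
      have hj'ne : j' ≠ f₀ n0 := by
        rw [hj']
        split_ifs with hcase
        · rw [hcase]
          simp [hj0, hj1, Fin.ext_iff]
        · exact fun e => hcase e.symm
      have e0 := hzero f₀
      have e1 := hzero (Function.update f₀ n0 j')
      have h4 : ∑ m : Fin N, (h m.succ * Complex.exp ((τ (Function.update f₀ n0 j' m) : ℂ) * Complex.I)
          - h m.succ * Complex.exp ((τ (f₀ m) : ℂ) * Complex.I))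
          = h n0.succ * (Complex.exp ((τ j' : ℂ) * Complex.I) - Complex.exp ((τ (f₀ n0) : ℂ) * Complex.I)) := by
        rw [Finset.sum_eq_single n0]
        · rw [Function.update_self]; ring
        · intro m _ hm; rw [Function.update_of_ne hm]; ring
        · intro habs; exact absurd (Finset.mem_univ n0) habs
      rw [Finset.sum_sub_distrib] at h4
      have h5 : h n0.succ * (Complex.exp ((τ j' : ℂ) * Complex.I)
          - Complex.exp ((τ (f₀ n0) : ℂ) * Complex.I)) = 0 := by
        rw [← h4]
        linear_combination e1 - e0
      rcases mul_eq_zero.1 h5 with h6 | h6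
      · exact hh0 n0.succ h6
      · exact hτne j' (f₀ n0) hj'ne (sub_eq_zero.1 h6)
  have hr : 0 < r := norm_pos_iff.mpr hSne
  -- μ
  set μ : ℂ := ((r⁻¹ : ℝ) : ℂ) * S with hμdef
  have hμabs : ‖μ‖ = 1 := by
    rw [hμdef, norm_mul, Complex.norm_real, Real.norm_eq_abs, abs_of_pos (by positivity : (0:ℝ) < r⁻¹), ← hrdef]
    field_simp
  have hμne : μ ≠ 0 := by
    intro e; rw [e, norm_zero] at hμabs; norm_num at hμabs
  set a : ℝ := μ.arg with hadef
  have hμexp : μ = Complex.exp ((a:ℂ) * Complex.I) := by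
    have := Complex.norm_mul_exp_arg_mul_I μ
    rw [hμabs] at this
    simpa using this.symm
  have hSμ : S = ((r:ℝ):ℂ) * μ := by
    rw [hμdef]
    rw [← mul_assoc, ← Complex.ofReal_mul]
    rw [mul_inv_cancel₀ (ne_of_gt hr)]
    simp
  have hSmul : S * (starRingEnd ℂ) μ = ((r:ℝ):ℂ) := by
    rw [hSμ, mul_assoc, Complex.mul_conj]
    have : Complex.normSq μ = 1 := by
      rw [← Complex.sq_norm, hμabs]; norm_num
    rw [this]
    simp
  have hconj : (starRingEnd ℂ) μ = Complex.exp (-(a:ℂ) * Complex.I) := by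
    rw [hμexp, ← Complex.exp_conj]
    congr 1
    simp
  -- real part formula
  have hRe : ∀ (n : Fin (N+1)) (x : ℝ),
      (h n * Complex.exp ((x:ℂ) * Complex.I) * (starRingEnd ℂ) μ).re
        = β n * Real.cos (x + α n - a) := by
    intro n x
    rw [hh n, hconj, mul_assoc, mul_assoc, ← Complex.exp_add, ← Complex.exp_add]
    have : (α n : ℂ) * Complex.I + ((x:ℂ) * Complex.I + -(a:ℂ) * Complex.I)
        = ((x + α n - a : ℝ) : ℂ) * Complex.I := by push_cast; ring
    rw [this, Complex.re_ofReal_mul, Complex.exp_ofReal_mul_I_re]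
  -- exchange bound on |S'|
  have hkey : ∀ (n : Fin N) (x : ℝ), x ∈ Phi K →
      ‖S + h n.succ * (Complex.exp ((x:ℂ) * Complex.I)
        - Complex.exp ((τ (f₀ n) : ℂ) * Complex.I))‖ ≤ r := by
    intro n x hx
    classical
    set u : Fin N → ℝ := Function.update (fun p => τ (f₀ p)) n x with hu
    have hmem : ∀ m, u m ∈ Phi K := by
      intro m
      rcases eq_or_ne m n with rfl | hm
      · rw [hu, Function.update_self]; exact hx
      · rw [hu, Function.update_of_ne hm]; exact hτPhi (f₀ m)
    have h4 : ∑ m : Fin N, (h m.succ * Complex.exp ((u m : ℂ) * Complex.I)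
        - h m.succ * Complex.exp ((τ (f₀ m) : ℂ) * Complex.I))
        = h n.succ * (Complex.exp ((x:ℂ) * Complex.I)
          - Complex.exp ((τ (f₀ n) : ℂ) * Complex.I)) := by
      rw [Finset.sum_eq_single n]
      · rw [hu, Function.update_self]; ring
      · intro m _ hm; rw [hu, Function.update_of_ne hm]; ring
      · intro habs; exact absurd (Finset.mem_univ n) habs
    rw [Finset.sum_sub_distrib] at h4
    have hsum : h 0 + ∑ m : Fin N, h m.succ * Complex.exp ((u m : ℂ) * Complex.I)
        = S + h n.succ * (Complex.exp ((x:ℂ) * Complex.I)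
          - Complex.exp ((τ (f₀ n) : ℂ) * Complex.I)) := by
      rw [hSdef]
      linear_combination h4
    rw [← hsum]
    exact hB u hmem
  -- exchange bound on cosines
  have hexch : ∀ (n : Fin N) (x : ℝ), x ∈ Phi K →
      Real.cos (x + α n.succ - a) ≤ Real.cos (τ (f₀ n) + α n.succ - a) := by
    intro n x hx
    have h1 := hkey n x hx
    set D : ℂ := h n.succ * (Complex.exp ((x:ℂ) * Complex.I)
        - Complex.exp ((τ (f₀ n) : ℂ) * Complex.I)) with hD
    have h2 : ((S + D) * (starRingEnd ℂ) μ).re ≤ r := by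
      refine (Complex.re_le_norm _).trans ?_
      rw [norm_mul, Complex.norm_conj, hμabs, mul_one]
      exact h1
    have h3 : ((S + D) * (starRingEnd ℂ) μ).re
        = r + β n.succ * (Real.cos (x + α n.succ - a) - Real.cos (τ (f₀ n) + α n.succ - a)) := by
      have expand : (S + D) * (starRingEnd ℂ) μ
          = S * (starRingEnd ℂ) μ
            + (h n.succ * Complex.exp ((x:ℂ) * Complex.I) * (starRingEnd ℂ) μ
              - h n.succ * Complex.exp ((τ (f₀ n) : ℂ) * Complex.I) * (starRingEnd ℂ) μ) := by
        rw [hD]; ring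
      rw [expand, Complex.add_re, Complex.sub_re, hRe, hRe, hSmul, Complex.ofReal_re]
      ring
    rw [h3] at h2
    nlinarith [hβ n.succ]
  refine ⟨fun n => τ (f₀ n), fun n => hτPhi (f₀ n), hB, μ, hμne, hμabs, ?_, ?_⟩
  · -- μ avoids midpoints
    intro n k hk1 hk2 hcontra
    set b : ℝ := α n.succ + ((k:ℝ) - 0.5) * ω with hb
    have hab : Complex.exp ((a:ℂ) * Complex.I) = Complex.exp ((b:ℂ) * Complex.I) := by
      rw [← hμexp]; exact hcontra
    obtain ⟨m, hm⟩ := exp_real_eq_iff hab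
    have hωlt : ω < 2*π := by
      rw [hω, div_lt_iff₀ hKR0]; nlinarith
    have hgrid : ∀ t : ℤ, Real.cos (((t:ℝ) + 1/2) * ω) ≤ Real.cos (ω/2) := by
      intro t
      have h1 : Real.cos (((t:ℝ)+1/2)*ω) = Real.cos (cdist (((t:ℝ)+1/2)*ω) 0) := by
        rw [cos_cdist, sub_zero]
      rw [h1]
      apply Real.cos_le_cos_of_nonneg_of_le_pi (by positivity) (cdist_le_pi _ _)
      apply le_csInf (Set.range_nonempty _)
      rintro z ⟨mm, rfl⟩
      show ω/2 ≤ |((t:ℝ)+1/2)*ω - 0 + 2*π*mm|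
      have he : ((t:ℝ)+1/2)*ω - 0 + 2*π*mm = (((t + K*mm : ℤ):ℝ) + 1/2) * ω := by
        rw [← hKω]; push_cast; ring
      rw [he, abs_mul, abs_of_pos hω0]
      have h2 : (1:ℝ)/2 ≤ |((t + K*mm : ℤ):ℝ) + 1/2| := by
        set q : ℤ := t + K*mm with hq
        rcases le_or_gt 0 q with hq0 | hq0
        · have hc : (0:ℝ) ≤ (q:ℝ) := by exact_mod_cast hq0
          rw [abs_of_pos (by linarith)]
          linarith
        · have hc : (q:ℝ) ≤ -1 := by exact_mod_cast (by omega : q ≤ -1)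
          rw [abs_of_neg (by linarith)]
          linarith
      nlinarith
    have e0 : Real.cos (τ (f₀ n) + α n.succ - a) ≤ Real.cos (ω/2) := by
      have he : τ (f₀ n) + α n.succ - a
          = (((((f₀ n) : ℕ) : ℤ) + 1 - k + 1/2 : ℝ)) * ω + (-m : ℤ) * (2*π) := by
        rw [hm, hb, hτ]; push_cast; ring_nf
      rw [show ((((f₀ n) : ℕ) : ℤ) + 1 - k + 1/2 : ℝ) = (((((f₀ n) : ℕ) : ℤ) + 1 - (k:ℤ) : ℤ) : ℝ) + 1/2 by push_cast; ring] at he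
      rw [he, Real.cos_add_int_mul_two_pi]
      exact hgrid _
    set k' : ℕ := if k = 1 then K else k - 1 with hk'
    have hk'1 : 1 ≤ k' := by rw [hk']; split_ifs <;> omega
    have hk'2 : k' ≤ K := by rw [hk']; split_ifs <;> omega
    have hPhi1 : ((k:ℝ) * ω) ∈ Phi K := ⟨k, hk1, hk2, by rw [hω]⟩
    have hPhi2 : ((k':ℝ) * ω) ∈ Phi K := ⟨k', hk'1, hk'2, by rw [hω]⟩
    have hcos1 : Real.cos ((k:ℝ)*ω + α n.succ - a) = Real.cos (ω/2) := by
      have he : (k:ℝ)*ω + α n.succ - a = ω/2 + (-m : ℤ) * (2*π) := by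
        rw [hm, hb]; push_cast; ring_nf
      rw [he, Real.cos_add_int_mul_two_pi]
    have hcos2 : Real.cos ((k':ℝ)*ω + α n.succ - a) = Real.cos (ω/2) := by
      rw [hk']
      split_ifs with hcase
      · have he : ((K:ℕ):ℝ)*ω + α n.succ - a = -(ω/2) + ((1 - m : ℤ) : ℝ) * (2*π) := by
          rw [hm, hb, hcase, ← hKω]; push_cast; ring_nf
        rw [show (((1 - m : ℤ)) : ℝ) = (((1 - m : ℤ) : ℤ) : ℝ) by push_cast; ring] at he
        rw [he, Real.cos_add_int_mul_two_pi, Real.cos_neg]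
      · have he : ((k-1:ℕ):ℝ)*ω + α n.succ - a = -(ω/2) + (-m : ℤ) * (2*π) := by
          rw [hm, hb, Nat.cast_sub hk1]; push_cast; ring_nf
        rw [he, Real.cos_add_int_mul_two_pi, Real.cos_neg]
    have hne12 : Complex.exp ((((k:ℝ)*ω : ℝ) : ℂ) * Complex.I)
        ≠ Complex.exp ((((k':ℝ)*ω : ℝ) : ℂ) * Complex.I) := by
      apply exp_real_ne
      · have hkk' : k ≠ k' := by rw [hk']; split_ifs <;> omega
        have hc : (k:ℝ) ≠ (k':ℝ) := by exact_mod_cast hkk'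
        intro e
        exact hc (mul_right_cancel₀ (ne_of_gt hω0) e)
      · rw [hk']
        split_ifs with hcase
        · rw [hcase]
          have he : ((1:ℕ):ℝ)*ω - ((K:ℕ):ℝ)*ω = -(2*π - ω) := by rw [← hKω]; push_cast; ring
          rw [he, abs_neg, abs_of_pos (by linarith)]
          linarith
        · have he : (k:ℝ)*ω - ((k-1:ℕ):ℝ)*ω = ω := by rw [Nat.cast_sub hk1]; push_cast; ring
          rw [he, abs_of_pos hω0]
          linarith
    obtain ⟨x, hxPhi, hxcos, hxne⟩ :
        ∃ x : ℝ, x ∈ Phi K ∧ Real.cos (x + α n.succ - a) = Real.cos (ω/2) ∧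
          Complex.exp ((x:ℂ) * Complex.I) ≠ Complex.exp ((τ (f₀ n) : ℂ) * Complex.I) := by
      by_cases hcase : Complex.exp ((((k:ℝ)*ω : ℝ) : ℂ) * Complex.I)
          = Complex.exp ((τ (f₀ n) : ℂ) * Complex.I)
      · exact ⟨(k':ℝ)*ω, hPhi2, hcos2, fun e => hne12 (hcase.trans e.symm)⟩
      · exact ⟨(k:ℝ)*ω, hPhi1, hcos1, hcase⟩
    have heq : Real.cos (τ (f₀ n) + α n.succ - a) = Real.cos (x + α n.succ - a) := by
      have h1 := hexch n x hxPhi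
      rw [hxcos] at h1 ⊢
      exact le_antisymm e0 h1
    set D : ℂ := h n.succ * (Complex.exp ((x:ℂ) * Complex.I)
        - Complex.exp ((τ (f₀ n) : ℂ) * Complex.I)) with hD
    have habs' : ‖S + D‖ ≤ r := hkey n x hxPhi
    have hre : ((S + D) * (starRingEnd ℂ) μ).re = r := by
      have expand : (S + D) * (starRingEnd ℂ) μ
          = S * (starRingEnd ℂ) μ
            + (h n.succ * Complex.exp ((x:ℂ) * Complex.I) * (starRingEnd ℂ) μ
              - h n.succ * Complex.exp ((τ (f₀ n) : ℂ) * Complex.I) * (starRingEnd ℂ) μ) := by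
        rw [hD]; ring
      rw [expand, Complex.add_re, Complex.sub_re, hRe, hRe, hSmul, Complex.ofReal_re, heq]
      ring
    have habs2 : ‖(S + D) * (starRingEnd ℂ) μ‖ ≤ r := by
      rw [norm_mul, Complex.norm_conj, hμabs, mul_one]; exact habs'
    have hre_abs : ((S + D) * (starRingEnd ℂ) μ).re
        = ‖(S + D) * (starRingEnd ℂ) μ‖ :=
      le_antisymm (Complex.re_le_norm _) (by rw [hre]; exact habs2)
    have heqz := re_eq_abs_imp hre_abs
    rw [← hre_abs, hre] at heqz
    have hcμ : (starRingEnd ℂ) μ ≠ 0 := by simpa using hμne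
    have hSD : S + D = S := by
      apply mul_right_cancel₀ hcμ
      rw [heqz, hSmul]
    have hD0 : D = 0 := by linear_combination hSD
    rw [hD] at hD0
    rcases mul_eq_zero.1 hD0 with h6 | h6
    · exact hh0 n.succ h6
    · exact hxne (sub_eq_zero.1 h6)
  · -- induced configuration
    intro n θ hθ
    exact cdist_le_of_cos _ _ _ (hexch n θ hθ)
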